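/- Let F be continuous and strictly increasing on [0,K] with F(0)=0, F(K)=1, and continuous derivative f > 0 on (0,K). Fix integers N ≥ 1, M ≥ 2 and b ∈ (0,K). For β ∈ (0,K) define P(β) = ∫_{max(b,β)}^K ((F(x) − F(b))/(1 − F(b)))^(N(M−1)) · N·((F(x) − F(β))/(1 − F(β)))^(N−1) · f(x)/(1 − F(β)) dx. Then P(b) = 1/M, and P is differentiable at β = b with P′(b) = (N·f(b)/(1 − F(b))) · (M−1)/(M·(NM−1)). -/

import Mathlib

open intervalIntegral

open MeasureTheory in
lemma aux_subst_ftc (g φ φd : ℝ → ℝ) (c Kk : ℝ) (hcK : c ≤ Kk)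
    (hg : Continuous g)
    (hφc : ContinuousOn φ (Set.Icc c Kk))
    (hφd : ∀ x ∈ Set.Ioo c Kk, HasDerivAt φ (φd x) x)
    (hnn : ∀ x ∈ Set.Ioo c Kk, 0 ≤ g (φ x) * φd x) :
    ∫ x in c..Kk, g (φ x) * φd x = ∫ u in (φ c)..(φ Kk), g u := by
  set G : ℝ → ℝ := fun u => ∫ s in (0:ℝ)..u, g s with hGdef
  have hGd : ∀ u, HasDerivAt G (g u) u := fun u =>
    (hg.integral_hasStrictDerivAt 0 u).hasDerivAt
  have hGc : Continuous G := by
    have : Differentiable ℝ G := fun u => (hGd u).differentiableAt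
    exact this.continuous
  have hΦc : ContinuousOn (fun x => G (φ x)) (Set.Icc c Kk) := hGc.comp_continuousOn hφc
  have hΦd : ∀ x ∈ Set.Ioo c Kk, HasDerivAt (fun x => G (φ x)) (g (φ x) * φd x) x :=
    fun x hx => (hGd (φ x)).comp x (hφd x hx)
  have hint : IntervalIntegrable (fun x => g (φ x) * φd x) volume c Kk := by
    apply intervalIntegrable_deriv_of_nonneg (g := fun x => G (φ x))
    · rwa [Set.uIcc_of_le hcK]
    · simpa [min_eq_left hcK, max_eq_right hcK] using hΦd
    · simpa [min_eq_left hcK, max_eq_right hcK] using hnn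
  rw [integral_eq_sub_of_hasDerivAt_of_le hcK hΦc hΦd hint]
  rw [← intervalIntegral.integral_interval_sub_left (hg.intervalIntegrable 0 (φ Kk))
    (hg.intervalIntegrable 0 (φ c))]

open MeasureTheory in
lemma aux_param_deriv (Fp Fp' : ℝ → ℝ → ℝ) (ε : ℝ) (hε : 0 < ε)
    (hFc : ∀ t ∈ Set.Icc (-ε) ε, ContinuousOn (fun u => Fp t u) (Set.Icc 0 1))
    (hF'c : ContinuousOn (fun p : ℝ × ℝ => Fp' p.1 p.2) (Set.Icc (-ε) ε ×ˢ Set.Icc 0 1))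
    (hdiff : ∀ u ∈ Set.Icc (0:ℝ) 1, ∀ t ∈ Set.Ioo (-ε) ε,
      HasDerivAt (fun t => Fp t u) (Fp' t u) t) :
    HasDerivAt (fun t => ∫ u in (0:ℝ)..1, Fp t u) (∫ u in (0:ℝ)..1, Fp' 0 u) 0 := by
  obtain ⟨C, hC⟩ := (isCompact_Icc.prod isCompact_Icc).exists_bound_of_continuousOn hF'c
  have hball : Metric.ball (0:ℝ) (ε/2) ⊆ Set.Icc (-ε) ε := by
    intro t ht
    rw [Metric.mem_ball, Real.dist_eq, sub_zero] at ht
    have := abs_lt.mp ht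
    constructor <;> linarith [this.1, this.2]
  have hball' : Metric.ball (0:ℝ) (ε/2) ⊆ Set.Ioo (-ε) ε := by
    intro t ht
    rw [Metric.mem_ball, Real.dist_eq, sub_zero] at ht
    have := abs_lt.mp ht
    constructor <;> linarith [this.1, this.2]
  have hsub : Set.uIoc (0:ℝ) 1 ⊆ Set.Icc 0 1 := by
    rw [Set.uIoc_of_le (by norm_num : (0:ℝ) ≤ 1)]
    exact Set.Ioc_subset_Icc_self
  have hmeas : ∀ t ∈ Set.Icc (-ε) ε,
      AEStronglyMeasurable (Fp t) (volume.restrict (Set.uIoc (0:ℝ) 1)) := by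
    intro t ht
    exact ((hFc t ht).aestronglyMeasurable measurableSet_Icc).mono_measure
      (Measure.restrict_mono hsub le_rfl)
  have h0 : (0:ℝ) ∈ Set.Icc (-ε) ε := by constructor <;> linarith
  refine (intervalIntegral.hasDerivAt_integral_of_dominated_loc_of_deriv_le
    (F := Fp) (F' := Fp') (bound := fun _ => C) (Metric.ball_mem_nhds 0 (half_pos hε)) ?_ ?_ ?_ ?_ ?_ ?_).2
  · exact Filter.eventually_of_mem (Metric.ball_mem_nhds 0 (half_pos hε))
      (fun t ht => hmeas t (hball ht))
  · exact (hFc 0 h0).intervalIntegrable_of_Icc (by norm_num)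
  · have : ContinuousOn (fun u => Fp' 0 u) (Set.Icc 0 1) := by
      have hmap : Continuous (fun u : ℝ => ((0:ℝ), u)) := by continuity
      exact hF'c.comp hmap.continuousOn (fun u hu => ⟨h0, hu⟩)
    exact (this.aestronglyMeasurable measurableSet_Icc).mono_measure
      (Measure.restrict_mono hsub le_rfl)
  · filter_upwards with u hu t ht
    exact hC (t, u) ⟨hball ht, hsub hu⟩
  · exact intervalIntegrable_const
  · filter_upwards with u hu t ht
    exact hdiff u (hsub hu) t (hball' ht)

noncomputable def Qone (a n : ℕ) : ℝ → ℝ :=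
  fun t => ∫ u in (0:ℝ)..1, (t + (1-t)*u)^a * ((n:ℝ) * u^(n-1))

noncomputable def Qtwo (a n : ℕ) : ℝ → ℝ :=
  fun t => ∫ u in (0:ℝ)..1, u^a * ((n:ℝ) * ((u-t)/(1-t))^(n-1)) * (1/(1-t))

open MeasureTheory in
lemma aux_Q0 (a n : ℕ) (ha : 1 ≤ a) (hn : 1 ≤ n) : Qone a n 0 = (n:ℝ)/((a:ℝ)+n) := by
  unfold Qone
  have key : Set.EqOn (fun u : ℝ => ((0:ℝ) + (1-(0:ℝ))*u)^a * ((n:ℝ)*u^(n-1)))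
      (fun u : ℝ => (n:ℝ) * u^(a+n-1)) (Set.uIcc 0 1) := by
    intro u _
    simp only
    have h1 : a+n-1 = a+(n-1) := by omega
    rw [h1, pow_add]
    ring
  rw [intervalIntegral.integral_congr key, intervalIntegral.integral_const_mul, integral_pow]
  have c1 : ((a+n-1:ℕ):ℝ) = (a:ℝ)+n-1 := by
    rw [Nat.cast_sub (by omega)]; push_cast; ring
  rw [c1, one_pow, zero_pow (by positivity)]
  have h2 : (2:ℝ) ≤ (a:ℝ)+n := by
    have : (2:ℕ) ≤ a+n := by omega
    exact_mod_cast this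
  rw [show (a:ℝ)+n-1+1 = (a:ℝ)+n by ring]
  field_simp
  norm_num

open MeasureTheory in
lemma aux_Q1 (a n : ℕ) (ha : 1 ≤ a) (hn : 1 ≤ n) :
    HasDerivAt (Qone a n) ((a:ℝ)*n/(((a:ℝ)+n-1)*((a:ℝ)+n))) 0 := by
  unfold Qone
  have h := aux_param_deriv (fun t u => (t + (1-t)*u)^a * ((n:ℝ) * u^(n-1)))
    (fun t u => ((a:ℝ) * (t+(1-t)*u)^(a-1) * (1-u)) * ((n:ℝ)*u^(n-1))) 1 one_pos
    (fun t _ => (by fun_prop : Continuous fun u : ℝ => (t + (1-t)*u)^a * ((n:ℝ) * u^(n-1))).continuousOn)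
    ((by fun_prop :
      Continuous fun p : ℝ × ℝ => ((a:ℝ) * (p.1+(1-p.1)*p.2)^(a-1) * (1-p.2)) * ((n:ℝ)*p.2^(n-1))).continuousOn)
    ?_
  · convert h using 1
    have key : ∀ u : ℝ, ((a:ℝ) * ((0:ℝ)+(1-(0:ℝ))*u)^(a-1) * (1-u)) * ((n:ℝ)*u^(n-1))
        = ((a:ℝ)*n) * u^(a+n-2) - ((a:ℝ)*n) * u^(a+n-1) := by
      intro u
      have h1 : a+n-1 = (a-1)+(n-1)+1 := by omega
      have h2 : a+n-2 = (a-1)+(n-1) := by omega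
      rw [h1, h2, pow_add, pow_succ]
      ring
    rw [intervalIntegral.integral_congr (g := fun u : ℝ =>
        ((a:ℝ)*n) * u^(a+n-2) - ((a:ℝ)*n) * u^(a+n-1)) (fun u _ => key u)]
    rw [intervalIntegral.integral_sub ((by fun_prop : Continuous fun u : ℝ =>
        ((a:ℝ)*n) * u^(a+n-2)).intervalIntegrable 0 1)
      ((by fun_prop : Continuous fun u : ℝ => ((a:ℝ)*n) * u^(a+n-1)).intervalIntegrable 0 1),
      intervalIntegral.integral_const_mul, intervalIntegral.integral_const_mul,
      integral_pow, integral_pow]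
    have c2 : ((a+n-2:ℕ):ℝ) = (a:ℝ)+n-2 := by
      rw [Nat.cast_sub (by omega)]; push_cast; ring
    have c1 : ((a+n-1:ℕ):ℝ) = (a:ℝ)+n-1 := by
      rw [Nat.cast_sub (by omega)]; push_cast; ring
    have h2 : (2:ℝ) ≤ (a:ℝ)+n := by
      have : (2:ℕ) ≤ a+n := by omega
      exact_mod_cast this
    rw [c1, c2]
    rw [one_pow, one_pow, zero_pow (by positivity), zero_pow (by positivity)]
    have hz1 : (a:ℝ)+n-1 ≠ 0 := by linarith
    have hz2 : (a:ℝ)+n ≠ 0 := by linarith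
    rw [show (a:ℝ)+n-2+1 = (a:ℝ)+n-1 by ring, show (a:ℝ)+n-1+1 = (a:ℝ)+n by ring]
    field_simp
    ring
  · intro u _ t _
    have h1 : HasDerivAt (fun t : ℝ => (1-t)*u) (-u) t := by
      simpa using ((hasDerivAt_id t).const_sub 1).mul_const u
    have hbase : HasDerivAt (fun t : ℝ => t + (1-t)*u) (1-u) t := by
      simpa [sub_eq_add_neg] using (hasDerivAt_id' (x := t)).fun_add h1
    exact (hbase.pow a).mul_const _

open MeasureTheory in
lemma aux_Q2 (a n : ℕ) (ha : 1 ≤ a) (hn : 1 ≤ n) :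
    HasDerivAt (Qtwo a n) ((a:ℝ)*n/(((a:ℝ)+n-1)*((a:ℝ)+n))) 0 := by
  unfold Qtwo
  set S := Set.Icc (-(1/2):ℝ) (1/2) ×ˢ Set.Icc (0:ℝ) 1 with hS
  have hden : ∀ p ∈ S, (1:ℝ) - p.1 ≠ 0 := by
    rintro ⟨t, u⟩ ⟨ht, _⟩
    have h2 : t ≤ 1/2 := ht.2
    intro hh
    simp only at hh
    linarith
  have hF'c : ContinuousOn (fun p : ℝ × ℝ =>
      p.2^a * ((n:ℝ) * (((n-1:ℕ):ℝ) * ((p.2-p.1)/(1-p.1))^(n-1-1) * ((p.2-1)/(1-p.1)^2))) * (1/(1-p.1))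
      + (p.2^a * ((n:ℝ) * ((p.2-p.1)/(1-p.1))^(n-1))) * (1/(1-p.1)^2)) S := by
    have hr : ContinuousOn (fun p : ℝ×ℝ => (p.2 - p.1)/(1-p.1)) S :=
      ContinuousOn.div (by fun_prop) (by fun_prop) hden
    have hr2 : ContinuousOn (fun p : ℝ×ℝ => (p.2 - 1)/(1-p.1)^2) S :=
      ContinuousOn.div (by fun_prop) (by fun_prop) (fun p hp => pow_ne_zero 2 (hden p hp))
    have hi1 : ContinuousOn (fun p : ℝ×ℝ => 1/(1-p.1)) S :=
      ContinuousOn.div (by fun_prop) (by fun_prop) hden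
    have hi2 : ContinuousOn (fun p : ℝ×ℝ => 1/(1-p.1)^2) S :=
      ContinuousOn.div (by fun_prop) (by fun_prop) (fun p hp => pow_ne_zero 2 (hden p hp))
    have hc2a : ContinuousOn (fun p : ℝ×ℝ => p.2^a) S := by fun_prop
    exact ((hc2a.mul (continuousOn_const.mul ((continuousOn_const.mul (hr.pow _)).mul hr2))).mul
      hi1).add ((hc2a.mul (continuousOn_const.mul (hr.pow _))).mul hi2)
  have h := aux_param_deriv
    (fun t u => u^a * ((n:ℝ) * ((u-t)/(1-t))^(n-1)) * (1/(1-t)))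
    (fun t u => u^a * ((n:ℝ) * (((n-1:ℕ):ℝ) * ((u-t)/(1-t))^(n-1-1) * ((u-1)/(1-t)^2))) * (1/(1-t))
      + (u^a * ((n:ℝ) * ((u-t)/(1-t))^(n-1))) * (1/(1-t)^2))
    (1/2) (by norm_num)
    ?_ hF'c ?_
  · convert h using 1
    have key : Set.EqOn (fun u : ℝ =>
        u^a * ((n:ℝ) * (((n-1:ℕ):ℝ) * ((u-(0:ℝ))/(1-(0:ℝ)))^(n-1-1) * ((u-1)/(1-(0:ℝ))^2))) * (1/(1-(0:ℝ)))
          + (u^a * ((n:ℝ) * ((u-(0:ℝ))/(1-(0:ℝ)))^(n-1))) * (1/(1-(0:ℝ))^2))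
        (fun u : ℝ => (n:ℝ)^2 * u^(a+n-1) - ((n:ℝ)*((n:ℝ)-1)) * u^(a+n-2))
        (Set.uIcc 0 1) := by
      intro u _
      simp only
      rcases Nat.lt_or_ge n 2 with h2 | h2
      · have hn1 : n = 1 := by omega
        subst hn1
        norm_num
      · obtain ⟨m, rfl⟩ : ∃ m, n = m + 2 := ⟨n - 2, by omega⟩
        have e1 : m + 2 - 1 = m + 1 := by omega
        have e2 : m + 1 - 1 = m := by omega
        have e3 : a + (m+2) - 1 = a + m + 1 := by omega
        have e4 : a + (m+2) - 2 = a + m := by omega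
        rw [e1, e2, e3, e4]
        push_cast
        rw [pow_add, pow_add, pow_succ]
        ring
    rw [intervalIntegral.integral_congr key]
    rw [intervalIntegral.integral_sub ((by fun_prop : Continuous fun u : ℝ =>
        (n:ℝ)^2 * u^(a+n-1)).intervalIntegrable 0 1)
      ((by fun_prop : Continuous fun u : ℝ => ((n:ℝ)*((n:ℝ)-1)) * u^(a+n-2)).intervalIntegrable 0 1),
      intervalIntegral.integral_const_mul, intervalIntegral.integral_const_mul,
      integral_pow, integral_pow]
    have c2 : ((a+n-2:ℕ):ℝ) = (a:ℝ)+n-2 := by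
      rw [Nat.cast_sub (by omega)]; push_cast; ring
    have c1 : ((a+n-1:ℕ):ℝ) = (a:ℝ)+n-1 := by
      rw [Nat.cast_sub (by omega)]; push_cast; ring
    have h2 : (2:ℝ) ≤ (a:ℝ)+n := by
      have : (2:ℕ) ≤ a+n := by omega
      exact_mod_cast this
    rw [c1, c2]
    rw [one_pow, one_pow, zero_pow (by positivity), zero_pow (by positivity)]
    have hz1 : (a:ℝ)+n-1 ≠ 0 := by linarith
    have hz2 : (a:ℝ)+n ≠ 0 := by linarith
    rw [show (a:ℝ)+n-2+1 = (a:ℝ)+n-1 by ring, show (a:ℝ)+n-1+1 = (a:ℝ)+n by ring]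
    field_simp
    ring
  · intro t ht
    fun_prop
  · intro u hu t ht
    have h1t : (1:ℝ) - t ≠ 0 := by
      have h2 : t < 1/2 := ht.2
      intro hh; linarith
    have hr : HasDerivAt (fun t : ℝ => (u-t)/(1-t)) ((u-1)/(1-t)^2) t := by
      have h0 := ((hasDerivAt_id' (x := t)).const_sub u).fun_div ((hasDerivAt_id' (x := t)).const_sub 1) h1t
      refine h0.congr_deriv ?_
      field_simp
      ring
    have hrp := hr.pow (n-1)
    have hmul := ((hrp.const_mul (n:ℝ)).const_mul ((u:ℝ)^a))
    have hinv := ((hasDerivAt_id t).const_sub 1).inv h1t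
    have hw := hmul.mul hinv
    simp only [id_eq, ← one_div, neg_neg] at hw
    exact hw

/-- A deviating designer's winning probability `P(β)` satisfies `P(b) = 1/M`
at the symmetric point, and `P` is differentiable at `β = b` with
`P′(b) = (N·f(b)/(1 − F(b))) · (M−1)/(M·(NM−1))`. -/
theorem stmt_11
    (K : ℝ) (hK : 0 < K)
    (F f : ℝ → ℝ)
    (hFcont : ContinuousOn F (Set.Icc 0 K))
    (hFmono : StrictMonoOn F (Set.Icc 0 K))
    (hF0 : F 0 = 0) (hFK : F K = 1)
    (hderiv : ∀ x ∈ Set.Ioo 0 K, HasDerivAt F (f x) x)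
    (hfpos : ∀ x ∈ Set.Ioo 0 K, 0 < f x)
    (hfcont : ContinuousOn f (Set.Ioo 0 K))
    (N M : ℕ) (hN : 1 ≤ N) (hM : 2 ≤ M)
    (b : ℝ) (hb : b ∈ Set.Ioo 0 K)
    (P : ℝ → ℝ)
    (hP : ∀ β ∈ Set.Ioo (0:ℝ) K,
      P β = ∫ x in (max b β)..K,
        ((F x - F b) / (1 - F b)) ^ (N * (M - 1))
          * ((N : ℝ) * ((F x - F β) / (1 - F β)) ^ (N - 1))
          * (f x / (1 - F β))) :
    P b = 1 / M ∧
    HasDerivAt P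
      (((N : ℝ) * f b / (1 - F b)) * (((M : ℝ) - 1) / (M * ((N : ℝ) * M - 1))))
      b := by
  obtain ⟨hb0, hbK⟩ := hb
  have hbIcc : b ∈ Set.Icc 0 K := ⟨hb0.le, hbK.le⟩
  have hKIcc : K ∈ Set.Icc 0 K := ⟨hK.le, le_rfl⟩
  have hmonoF := hFmono.monotoneOn
  have hFb1 : F b < 1 := by rw [← hFK]; exact hFmono hbIcc hKIcc hbK
  have h1b : (0:ℝ) < 1 - F b := by linarith
  have haN : 1 ≤ N * (M - 1) := by
    calc 1 = 1 * 1 := (one_mul 1).symm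
    _ ≤ N * (M-1) := Nat.mul_le_mul hN (by omega)
  -- ### the two representations of P
  have hE1 : ∀ β ∈ Set.Ico b K, P β = Qone (N*(M-1)) N ((F β - F b)/(1 - F b)) := by
    intro β hβ
    have hβI : β ∈ Set.Ioo 0 K := ⟨lt_of_lt_of_le hb0 hβ.1, hβ.2⟩
    have hβIcc : β ∈ Set.Icc 0 K := ⟨hβI.1.le, hβI.2.le⟩
    have hFβ1 : F β < 1 := by rw [← hFK]; exact hFmono hβIcc hKIcc hβ.2
    have h1β : (0:ℝ) < 1 - F β := by linarith
    have hFbβ : F b ≤ F β := hmonoF hbIcc hβIcc hβ.1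
    set t := (F β - F b)/(1 - F b) with ht_def
    have ht0 : 0 ≤ t := div_nonneg (by linarith) h1b.le
    have ht1 : t ≤ 1 := by rw [ht_def, div_le_one h1b]; linarith
    rw [hP β hβI, max_eq_right hβ.1]
    have heqon : Set.EqOn
        (fun x => ((F x - F b) / (1 - F b)) ^ (N * (M - 1))
            * ((N : ℝ) * ((F x - F β) / (1 - F β)) ^ (N - 1)) * (f x / (1 - F β)))
        (fun x => (t + (1-t) * ((F x - F β)/(1 - F β))) ^ (N*(M-1))
            * ((N : ℝ) * ((F x - F β) / (1 - F β)) ^ (N - 1)) * (f x / (1 - F β)))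
        (Set.uIcc β K) := by
      intro x _
      have hbase : (F x - F b)/(1 - F b) = t + (1-t) * ((F x - F β)/(1 - F β)) := by
        rw [ht_def]
        field_simp
        ring
      simp only
      rw [hbase]
    rw [intervalIntegral.integral_congr heqon]
    have hnn : ∀ x ∈ Set.Ioo β K, 0 ≤ (t + (1-t) * ((F x - F β)/(1 - F β))) ^ (N*(M-1))
        * ((N : ℝ) * ((F x - F β) / (1 - F β)) ^ (N - 1)) * (f x / (1 - F β)) := by
      intro x hx
      have hxI : x ∈ Set.Ioo 0 K := ⟨lt_trans hβI.1 hx.1, hx.2⟩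
      have hxIcc : x ∈ Set.Icc 0 K := ⟨hxI.1.le, hxI.2.le⟩
      have hφx : 0 ≤ (F x - F β)/(1 - F β) :=
        div_nonneg (by linarith [hmonoF hβIcc hxIcc hx.1.le]) h1β.le
      have h1 : 0 ≤ t + (1-t) * ((F x - F β)/(1 - F β)) :=
        add_nonneg ht0 (mul_nonneg (by linarith) hφx)
      exact mul_nonneg (mul_nonneg (pow_nonneg h1 _)
        (mul_nonneg (Nat.cast_nonneg N) (pow_nonneg hφx _)))
        (div_nonneg (hfpos x hxI).le h1β.le)
    have hsub := aux_subst_ftc (fun u => (t + (1-t)*u)^(N*(M-1)) * ((N:ℝ) * u^(N-1)))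
      (fun x => (F x - F β)/(1 - F β)) (fun x => f x/(1 - F β)) β K hβ.2.le
      (by fun_prop)
      (((hFcont.mono (Set.Icc_subset_Icc hβI.1.le le_rfl)).sub continuousOn_const).div_const _)
      (fun x hx => ((hderiv x ⟨lt_trans hβI.1 hx.1, hx.2⟩).sub_const _).div_const _)
      hnn
    have hφβ : (F β - F β)/(1 - F β) = 0 := by simp
    have hφK : (F K - F β)/(1 - F β) = 1 := by rw [hFK]; exact div_self h1β.ne'
    calc (∫ x in β..K, (t + (1-t) * ((F x - F β)/(1 - F β))) ^ (N*(M-1))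
            * ((N : ℝ) * ((F x - F β) / (1 - F β)) ^ (N - 1)) * (f x / (1 - F β)))
        = ∫ u in ((F β - F β)/(1 - F β))..((F K - F β)/(1 - F β)),
            (t + (1-t)*u)^(N*(M-1)) * ((N:ℝ) * u^(N-1)) := hsub
      _ = Qone (N*(M-1)) N t := by rw [hφβ, hφK]; rfl
  have hE2 : ∀ β ∈ Set.Ioc 0 b, P β = Qtwo (N*(M-1)) N ((F β - F b)/(1 - F b)) := by
    intro β hβ
    have hβI : β ∈ Set.Ioo 0 K := ⟨hβ.1, lt_of_le_of_lt hβ.2 hbK⟩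
    have hβIcc : β ∈ Set.Icc 0 K := ⟨hβI.1.le, hβI.2.le⟩
    have hFβ1 : F β < 1 := by rw [← hFK]; exact hFmono hβIcc hKIcc hβI.2
    have h1β : (0:ℝ) < 1 - F β := by linarith
    have hFβb : F β ≤ F b := hmonoF hβIcc hbIcc hβ.2
    set t := (F β - F b)/(1 - F b) with ht_def
    have ht0 : t ≤ 0 := div_nonpos_of_nonpos_of_nonneg (by linarith) h1b.le
    have h1t : (0:ℝ) < 1 - t := by linarith
    have h1teq : 1 - t = (1 - F β)/(1 - F b) := by rw [ht_def]; field_simp; ring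
    rw [hP β hβI, max_eq_left hβ.2]
    have heqon : Set.EqOn
        (fun x => ((F x - F b) / (1 - F b)) ^ (N * (M - 1))
            * ((N : ℝ) * ((F x - F β) / (1 - F β)) ^ (N - 1)) * (f x / (1 - F β)))
        (fun x => ((F x - F b)/(1 - F b)) ^ (N*(M-1))
            * ((N : ℝ) * ((((F x - F b)/(1 - F b)) - t)/(1-t)) ^ (N - 1)) * (1/(1-t))
            * (f x / (1 - F b)))
        (Set.uIcc b K) := by
      intro x _
      simp only
      have hB : (F x - F β)/(1 - F β) = (((F x - F b)/(1 - F b)) - t)/(1-t) := by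
        rw [h1teq, ht_def]
        field_simp
        all_goals ring
      have hC : f x / (1 - F β) = 1/(1-t) * (f x / (1 - F b)) := by
        rw [h1teq]
        field_simp
        all_goals ring
      rw [hB, hC]
      ring
    rw [intervalIntegral.integral_congr heqon]
    have hnn : ∀ x ∈ Set.Ioo b K, 0 ≤ ((F x - F b)/(1 - F b)) ^ (N*(M-1))
        * ((N : ℝ) * ((((F x - F b)/(1 - F b)) - t)/(1-t)) ^ (N - 1)) * (1/(1-t))
        * (f x / (1 - F b)) := by
      intro x hx
      have hxI : x ∈ Set.Ioo 0 K := ⟨lt_trans hb0 hx.1, hx.2⟩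
      have hxIcc : x ∈ Set.Icc 0 K := ⟨hxI.1.le, hxI.2.le⟩
      have hφx : 0 ≤ (F x - F b)/(1 - F b) :=
        div_nonneg (by linarith [hmonoF hbIcc hxIcc hx.1.le]) h1b.le
      have h2 : 0 ≤ (((F x - F b)/(1 - F b)) - t)/(1-t) :=
        div_nonneg (by linarith) h1t.le
      exact mul_nonneg (mul_nonneg (mul_nonneg (pow_nonneg hφx _)
        (mul_nonneg (Nat.cast_nonneg N) (pow_nonneg h2 _)))
        (by positivity)) (div_nonneg (hfpos x hxI).le h1b.le)
    have hsub := aux_subst_ftc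
      (fun u => u^(N*(M-1)) * ((N:ℝ) * ((u-t)/(1-t))^(N-1)) * (1/(1-t)))
      (fun x => (F x - F b)/(1 - F b)) (fun x => f x/(1 - F b)) b K hbK.le
      (by fun_prop)
      (((hFcont.mono (Set.Icc_subset_Icc hb0.le le_rfl)).sub continuousOn_const).div_const _)
      (fun x hx => ((hderiv x ⟨lt_trans hb0 hx.1, hx.2⟩).sub_const _).div_const _)
      hnn
    have hφb : (F b - F b)/(1 - F b) = 0 := by simp
    have hφK : (F K - F b)/(1 - F b) = 1 := by rw [hFK]; exact div_self h1b.ne'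
    calc (∫ x in b..K, ((F x - F b)/(1 - F b)) ^ (N*(M-1))
            * ((N : ℝ) * ((((F x - F b)/(1 - F b)) - t)/(1-t)) ^ (N - 1)) * (1/(1-t))
            * (f x / (1 - F b)))
        = ∫ u in ((F b - F b)/(1 - F b))..((F K - F b)/(1 - F b)),
            u^(N*(M-1)) * ((N:ℝ) * ((u-t)/(1-t))^(N-1)) * (1/(1-t)) := hsub
      _ = Qtwo (N*(M-1)) N t := by rw [hφb, hφK]; rfl
  -- ### casts and nonzero facts
  have hMR : (2:ℝ) ≤ (M:ℝ) := by exact_mod_cast hM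
  have hNR : (1:ℝ) ≤ (N:ℝ) := by exact_mod_cast hN
  have hcast : ((N*(M-1) : ℕ) : ℝ) = (N:ℝ) * ((M:ℝ) - 1) := by
    rw [Nat.cast_mul, Nat.cast_sub (by omega : 1 ≤ M), Nat.cast_one]
  have hNM2 : (2:ℝ) ≤ (N:ℝ)*(M:ℝ) := by nlinarith
  have hTb0 : (F b - F b)/(1 - F b) = 0 := by simp
  constructor
  -- ### value at b
  · rw [hE1 b ⟨le_rfl, hbK⟩, hTb0, aux_Q0 _ _ haN hN, hcast]
    have k2 : (N:ℝ)*((M:ℝ)-1)+(N:ℝ) ≠ 0 := by nlinarith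
    have hM0 : (M:ℝ) ≠ 0 := by nlinarith
    field_simp
    rw [sub_add_cancel, div_self hM0]
  -- ### derivative
  · have hTd : HasDerivAt (fun β => (F β - F b)/(1 - F b)) (f b/(1 - F b)) b :=
      ((hderiv b ⟨hb0, hbK⟩).sub_const _).div_const _
    set D0 : ℝ := ((N*(M-1):ℕ):ℝ)*(N:ℝ) /
        ((((N*(M-1):ℕ):ℝ)+(N:ℝ)-1) * (((N*(M-1):ℕ):ℝ)+(N:ℝ))) with hD0
    have hQ1d : HasDerivAt (Qone (N*(M-1)) N) D0 ((F b - F b)/(1 - F b)) := by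
      rw [hTb0]; exact aux_Q1 _ _ haN hN
    have hQ2d : HasDerivAt (Qtwo (N*(M-1)) N) D0 ((F b - F b)/(1 - F b)) := by
      rw [hTb0]; exact aux_Q2 _ _ haN hN
    have hcomp1 := hQ1d.comp b hTd
    have hcomp2 := hQ2d.comp b hTd
    have hIci : HasDerivWithinAt P (D0 * (f b/(1 - F b))) (Set.Ici b) b := by
      refine (hcomp1.hasDerivWithinAt).congr_of_eventuallyEq ?_ ?_
      · refine Filter.eventuallyEq_of_mem ?_ (fun β hβ => hE1 β hβ)
        rw [← Set.Ici_inter_Iio]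
        exact Filter.inter_mem self_mem_nhdsWithin
          (mem_nhdsWithin_of_mem_nhds (Iio_mem_nhds hbK))
      · exact hE1 b ⟨le_rfl, hbK⟩
    have hIic : HasDerivWithinAt P (D0 * (f b/(1 - F b))) (Set.Iic b) b := by
      refine (hcomp2.hasDerivWithinAt).congr_of_eventuallyEq ?_ ?_
      · refine Filter.eventuallyEq_of_mem ?_ (fun β hβ => hE2 β hβ)
        rw [← Set.Ioi_inter_Iic]
        exact Filter.inter_mem
          (mem_nhdsWithin_of_mem_nhds (Ioi_mem_nhds hb0)) self_mem_nhdsWithin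
      · exact hE2 b ⟨hb0, le_rfl⟩
    have hU := hIic.union hIci
    rw [Set.Iic_union_Ici] at hU
    have hP' : HasDerivAt P (D0 * (f b/(1 - F b))) b := hasDerivWithinAt_univ.mp hU
    convert hP' using 1
    rw [hD0, hcast]
    have k1 : (N:ℝ)*((M:ℝ)-1)+(N:ℝ)-1 ≠ 0 := by nlinarith
    have k2 : (N:ℝ)*((M:ℝ)-1)+(N:ℝ) ≠ 0 := by nlinarith
    have k3 : (N:ℝ)*(M:ℝ)-1 ≠ 0 := by nlinarith
    have k4 : (M:ℝ) ≠ 0 := by nlinarith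
    field_simp
    simp only [sub_add_cancel]
    field_simp
    rw [mul_comm (M:ℝ) N, mul_div_assoc, div_self k3, mul_one]
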